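/- Let (K,ρ) be a compact metric space, let m≥1 and k₊,k₋ with k₊+k₋≥m, and let F₊,F₋ be maps from K to the set of linear subspaces of ℝ^m with dim F₊(x)=k₊ and dim F₋(x)=k₋ for all x∈K. Assume F₊ is Hölder continuous with exponent ν₊ and F₋ is Hölder continuous with exponent ν₋, with respect to the distance dist between subspaces, and that for every x∈K the subspaces are in general position: F₊(x)+F₋(x)=ℝ^m (so that dim(F₊(x)∩F₋(x))=k₊+k₋−m). Then the map I:K→{subspaces of ℝ^m} defined by I(x)=F₊(x)∩F₋(x) is Hölder continuous with exponent min(ν₊,ν₋); that is, there exists H>0 such that dist(I(x),I(y)) ≤ H·ρ(x,y)^{min(ν₊,ν₋)} for all x,y∈K. -/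

import Mathlib

noncomputable def subDist {N : ℕ} (E F : Submodule ℝ (EuclideanSpace ℝ (Fin N))) : ℝ :=
  max (sSup {r : ℝ | ∃ v ∈ E, ‖v‖ = 1 ∧ r = Metric.infDist v (F : Set (EuclideanSpace ℝ (Fin N)))})
      (sSup {r : ℝ | ∃ v ∈ F, ‖v‖ = 1 ∧ r = Metric.infDist v (E : Set (EuclideanSpace ℝ (Fin N)))})

section Helpers

variable {m : ℕ}

local notation "Euc" => EuclideanSpace ℝ (Fin m)

noncomputable def prj (U : Submodule ℝ (EuclideanSpace ℝ (Fin m))) (v : EuclideanSpace ℝ (Fin m)) :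
    EuclideanSpace ℝ (Fin m) := (U.orthogonalProjectionOnto v : EuclideanSpace ℝ (Fin m))

lemma prj_mem (U : Submodule ℝ Euc) (v : Euc) : prj U v ∈ U := (U.orthogonalProjectionOnto v).2

lemma prj_add (U : Submodule ℝ Euc) (u v : Euc) : prj U (u + v) = prj U u + prj U v := by
  simp [prj]

lemma prj_smul (U : Submodule ℝ Euc) (c : ℝ) (v : Euc) : prj U (c • v) = c • prj U v := by
  simp [prj]

lemma prj_sub (U : Submodule ℝ Euc) (u v : Euc) : prj U (u - v) = prj U u - prj U v := by
  simp [prj]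

lemma inner_prj_self (U : Submodule ℝ Euc) (v : Euc) :
    (inner ℝ (prj U v) v : ℝ) = ‖prj U v‖ ^ 2 := by
  have h := Submodule.sub_starProjection_mem_orthogonal (K := U) v
  have h0 : (inner ℝ (prj U v) (v - prj U v) : ℝ) = 0 := by
    have := (Submodule.mem_orthogonal U (v - prj U v)).1 h (prj U v) (prj_mem U v)
    exact this
  have : (inner ℝ (prj U v) v : ℝ) = inner ℝ (prj U v) (prj U v) + inner ℝ (prj U v) (v - prj U v) := by
    rw [← inner_add_right]
    congr 1
    abel
  rw [this, h0, real_inner_self_eq_norm_sq]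
  ring

lemma norm_prj_le (U : Submodule ℝ Euc) (v : Euc) : ‖prj U v‖ ≤ ‖v‖ := by
  have h1 := inner_prj_self U v
  have h2 : (inner ℝ (prj U v) v : ℝ) ≤ ‖prj U v‖ * ‖v‖ := real_inner_le_norm _ _
  rcases eq_or_lt_of_le (norm_nonneg (prj U v)) with h | h
  · rw [← h]; exact norm_nonneg v
  · nlinarith

lemma prj_minimal (U : Submodule ℝ Euc) (v w : Euc) (hw : w ∈ U) :
    ‖v - prj U v‖ ≤ ‖v - w‖ := by
  have h := Submodule.starProjection_minimal (U := U) v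
  have : ‖v - prj U v‖ = ⨅ x : U, ‖v - x‖ := h
  rw [this]
  exact ciInf_le ⟨0, fun r ⟨x, hx⟩ => hx ▸ norm_nonneg _⟩ (⟨w, hw⟩ : U)

lemma subDist_symm (E F : Submodule ℝ Euc) : subDist E F = subDist F E := max_comm _ _

lemma infDist_le_subDist {E F : Submodule ℝ Euc} {v : Euc} (hv : v ∈ E) (hn : ‖v‖ = 1) :
    Metric.infDist v (F : Set Euc) ≤ subDist E F := by
  have hbdd : BddAbove {r : ℝ | ∃ v ∈ E, ‖v‖ = 1 ∧ r = Metric.infDist v (F : Set Euc)} := by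
    refine ⟨1, fun r ⟨u, hu, hun, hr⟩ => ?_⟩
    rw [hr]
    calc Metric.infDist u (F : Set Euc) ≤ dist u 0 :=
          Metric.infDist_le_dist_of_mem (Submodule.zero_mem F)
      _ = 1 := by rw [dist_zero_right, hun]
  exact le_trans (le_csSup hbdd ⟨v, hv, hn, rfl⟩) (le_max_left _ _)

lemma subDist_nonneg (E F : Submodule ℝ Euc) : 0 ≤ subDist E F := by
  refine le_trans ?_ (le_max_left _ _)
  exact Real.sSup_nonneg (fun r ⟨u, hu, hun, hr⟩ => hr ▸ Metric.infDist_nonneg)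

/-- Key contraction: for `v ∈ E`, the distance to its `F`-projection is at most
`subDist E F * ‖v‖`. -/
lemma norm_sub_prj_le (E F : Submodule ℝ Euc) (v : Euc) (hv : v ∈ E) :
    ‖v - prj F v‖ ≤ subDist E F * ‖v‖ := by
  rcases eq_or_ne v 0 with rfl | hv0
  · simp [prj]
  · have hvn : (0:ℝ) < ‖v‖ := norm_pos_iff.mpr hv0
    set e : Euc := ‖v‖⁻¹ • v with he
    have hee : e ∈ E := Submodule.smul_mem E _ hv
    have hen : ‖e‖ = 1 := by
      rw [he, norm_smul, norm_inv, norm_norm, inv_mul_cancel₀ hvn.ne']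
    have h1 : Metric.infDist e (F : Set Euc) ≤ subDist E F := infDist_le_subDist hee hen
    obtain ⟨w, hwF, hww⟩ :=
      (Submodule.closed_of_finiteDimensional F).exists_infDist_eq_dist
        ⟨0, Submodule.zero_mem F⟩ e
    have h2 : ‖e - prj F e‖ ≤ subDist E F := by
      calc ‖e - prj F e‖ ≤ ‖e - w‖ := prj_minimal F e w hwF
        _ = Metric.infDist e (F : Set Euc) := by rw [hww, dist_eq_norm]
        _ ≤ subDist E F := h1
    have h3 : ‖e - prj F e‖ = ‖v‖⁻¹ * ‖v - prj F v‖ := by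
      rw [he, prj_smul, ← smul_sub, norm_smul, norm_inv, norm_norm]
    rw [h3] at h2
    calc ‖v - prj F v‖ = ‖v‖ * (‖v‖⁻¹ * ‖v - prj F v‖) := by
          field_simp
      _ ≤ ‖v‖ * subDist E F := by
          exact mul_le_mul_of_nonneg_left h2 hvn.le
      _ = subDist E F * ‖v‖ := mul_comm _ _

/-- For `v` orthogonal to `E`, its `F`-projection is small. -/
lemma norm_prj_orth_le (E F : Submodule ℝ Euc) (v : Euc) (hv : v ∈ Eᗮ) :
    ‖prj F v‖ ≤ subDist E F * ‖v‖ := by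
  have h1 : (‖prj F v‖:ℝ) ^ 2 = inner ℝ (prj F v) v := (inner_prj_self F v).symm
  have h2 : (inner ℝ (prj E (prj F v)) v : ℝ) = 0 := by
    exact (Submodule.mem_orthogonal E v).1 hv _ (prj_mem E _)
  have h3 : (inner ℝ (prj F v) v : ℝ) = inner ℝ (prj F v - prj E (prj F v)) v := by
    rw [inner_sub_left, h2]; ring
  have h4 : (inner ℝ (prj F v - prj E (prj F v)) v : ℝ) ≤ ‖prj F v - prj E (prj F v)‖ * ‖v‖ :=
    real_inner_le_norm _ _
  have h5 : ‖prj F v - prj E (prj F v)‖ ≤ subDist F E * ‖prj F v‖ :=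
    norm_sub_prj_le F E (prj F v) (prj_mem F v)
  rw [subDist_symm F E] at h5
  have hd := subDist_nonneg E F
  rcases eq_or_lt_of_le (norm_nonneg (prj F v)) with h | h
  · rw [← h]; positivity
  · nlinarith [norm_nonneg v]

/-- Pointwise difference of projections bounded by `2 * subDist`. -/
lemma prj_diff_le (E F : Submodule ℝ Euc) (v : Euc) :
    ‖prj E v - prj F v‖ ≤ 2 * subDist E F * ‖v‖ := by
  have hdecomp : prj E v - prj F v = (prj E v - prj F (prj E v)) + prj F (prj E v - v) := by
    rw [prj_sub]; abel
  have h1 : ‖prj E v - prj F (prj E v)‖ ≤ subDist E F * ‖v‖ := by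
    calc ‖prj E v - prj F (prj E v)‖ ≤ subDist E F * ‖prj E v‖ :=
          norm_sub_prj_le E F _ (prj_mem E v)
      _ ≤ subDist E F * ‖v‖ :=
          mul_le_mul_of_nonneg_left (norm_prj_le E v) (subDist_nonneg E F)
  have hmem : prj E v - v ∈ Eᗮ := by
    have := Submodule.sub_starProjection_mem_orthogonal (K := E) v
    have h' : prj E v - v = -(v - prj E v) := by abel
    rw [h']
    exact Submodule.neg_mem _ this
  have h2 : ‖prj F (prj E v - v)‖ ≤ subDist E F * ‖v‖ := by
    calc ‖prj F (prj E v - v)‖ ≤ subDist E F * ‖prj E v - v‖ :=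
          norm_prj_orth_le E F _ hmem
      _ ≤ subDist E F * ‖v‖ := by
          have : ‖prj E v - v‖ ≤ ‖v‖ := by
            rw [norm_sub_rev]
            calc ‖v - prj E v‖ ≤ ‖v - 0‖ := prj_minimal E v 0 (Submodule.zero_mem E)
              _ = ‖v‖ := by rw [sub_zero]
          exact mul_le_mul_of_nonneg_left this (subDist_nonneg E F)
  calc ‖prj E v - prj F v‖ ≤ ‖prj E v - prj F (prj E v)‖ + ‖prj F (prj E v - v)‖ := by
        rw [hdecomp]; exact norm_add_le _ _
    _ ≤ 2 * subDist E F * ‖v‖ := by linarith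

end Helpers
section Helpers2

variable {m : ℕ} {K : Type*}

local notation "Euc" => EuclideanSpace ℝ (Fin m)

lemma prj_continuous (U : Submodule ℝ (EuclideanSpace ℝ (Fin m))) : Continuous (prj U) :=
  continuous_subtype_val.comp (U.orthogonalProjectionOnto).continuous

noncomputable def muF (Fp Fm : K → Submodule ℝ (EuclideanSpace ℝ (Fin m))) (y : K) :
    ℝ :=
  sInf ((fun v => ‖prj (Fp y) v‖ + ‖prj (Fm y) v‖) ''
    Metric.sphere (0 : EuclideanSpace ℝ (Fin m)) 1)

set_option maxHeartbeats 800000 in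
lemma muF_image_compact (Fp Fm : K → Submodule ℝ (EuclideanSpace ℝ (Fin m))) (y : K) :
    IsCompact ((fun v => ‖prj (Fp y) v‖ + ‖prj (Fm y) v‖) '' Metric.sphere (0 : Euc) 1) :=
  (isCompact_sphere 0 1).image (((prj_continuous (Fp y)).norm).add ((prj_continuous (Fm y)).norm))

lemma muF_attained (Fp Fm : K → Submodule ℝ (EuclideanSpace ℝ (Fin m))) (hm : 1 ≤ m) (y : K) :
    ∃ v : Euc, ‖v‖ = 1 ∧ muF Fp Fm y = ‖prj (Fp y) v‖ + ‖prj (Fm y) v‖ := by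
  have : Nontrivial Euc :=
    Module.nontrivial_of_finrank_pos (R := ℝ)
      (by rw [finrank_euclideanSpace_fin]; omega)
  have hne : (Metric.sphere (0 : Euc) 1).Nonempty := NormedSpace.sphere_nonempty.mpr zero_le_one
  have hmem := (muF_image_compact Fp Fm y).sInf_mem (hne.image _)
  obtain ⟨v, hv, hveq⟩ := hmem
  exact ⟨v, by simpa using hv, hveq.symm⟩

lemma muF_le (Fp Fm : K → Submodule ℝ (EuclideanSpace ℝ (Fin m))) (y : K) (v : Euc) (hv : ‖v‖ = 1) :
    muF Fp Fm y ≤ ‖prj (Fp y) v‖ + ‖prj (Fm y) v‖ :=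
  csInf_le (muF_image_compact Fp Fm y).bddBelow ⟨v, by simpa using hv, rfl⟩

lemma muF_pos (Fp Fm : K → Submodule ℝ (EuclideanSpace ℝ (Fin m))) (hm : 1 ≤ m) (y : K) (hgen : Fp y ⊔ Fm y = ⊤) : 0 < muF Fp Fm y := by
  obtain ⟨v, hv1, hveq⟩ := muF_attained Fp Fm hm y
  rcases lt_or_ge 0 (muF Fp Fm y) with h | h
  · exact h
  exfalso
  have h0 : muF Fp Fm y = 0 := le_antisymm h (hveq ▸ by positivity)
  rw [h0] at hveq
  have hp0 : prj (Fp y) v = 0 := by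
    have h1 : ‖prj (Fp y) v‖ = 0 := by
      have := norm_nonneg (prj (Fp y) v); have := norm_nonneg (prj (Fm y) v); linarith
    exact norm_eq_zero.mp h1
  have hm0 : prj (Fm y) v = 0 := by
    have h1 : ‖prj (Fm y) v‖ = 0 := by
      have := norm_nonneg (prj (Fp y) v); have := norm_nonneg (prj (Fm y) v); linarith
    exact norm_eq_zero.mp h1
  have hvp : v ∈ (Fp y)ᗮ := by
    have h3 : v - ((Fp y).orthogonalProjectionOnto v : EuclideanSpace ℝ (Fin m)) ∈ (Fp y)ᗮ :=
        Submodule.sub_starProjection_mem_orthogonal (K := Fp y) v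
    have h2 : v - ((Fp y).orthogonalProjectionOnto v : EuclideanSpace ℝ (Fin m)) = v := by
      rw [show (((Fp y).orthogonalProjectionOnto v : EuclideanSpace ℝ (Fin m)))
            = prj (Fp y) v from rfl, hp0, sub_zero]
    rwa [h2] at h3
  have hvm : v ∈ (Fm y)ᗮ := by
    have h3 : v - ((Fm y).orthogonalProjectionOnto v : EuclideanSpace ℝ (Fin m)) ∈ (Fm y)ᗮ :=
        Submodule.sub_starProjection_mem_orthogonal (K := Fm y) v
    have h2 : v - ((Fm y).orthogonalProjectionOnto v : EuclideanSpace ℝ (Fin m)) = v := by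
      rw [show (((Fm y).orthogonalProjectionOnto v : EuclideanSpace ℝ (Fin m)))
            = prj (Fm y) v from rfl, hm0, sub_zero]
    rwa [h2] at h3
  have hvtop : v ∈ Fp y ⊔ Fm y := by rw [hgen]; trivial
  obtain ⟨a, ha, b, hb, hab⟩ := Submodule.mem_sup.mp hvtop
  have hinner : (inner ℝ v v : ℝ) = 0 := by
    calc (inner ℝ v v : ℝ) = inner ℝ (a + b) v := by rw [hab]
      _ = inner ℝ a v + inner ℝ b v := inner_add_left _ _ _
      _ = 0 := by
          rw [(Submodule.mem_orthogonal (Fp y) v).1 hvp a ha,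
            (Submodule.mem_orthogonal (Fm y) v).1 hvm b hb]
          ring
  rw [real_inner_self_eq_norm_sq, hv1] at hinner
  norm_num at hinner

lemma muF_lower (Fp Fm : K → Submodule ℝ (EuclideanSpace ℝ (Fin m))) (y : K) (v : Euc) :
    muF Fp Fm y * ‖v‖ ≤ ‖prj (Fp y) v‖ + ‖prj (Fm y) v‖ := by
  rcases eq_or_ne v 0 with rfl | hv0
  · simp [prj]
  · have hvn : (0:ℝ) < ‖v‖ := norm_pos_iff.mpr hv0
    have he : ‖(‖v‖⁻¹ • v : Euc)‖ = 1 := by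
      rw [norm_smul, norm_inv, norm_norm, inv_mul_cancel₀ hvn.ne']
    have h := muF_le Fp Fm y _ he
    rw [prj_smul, prj_smul, norm_smul, norm_smul, norm_inv, norm_norm] at h
    have h2 : muF Fp Fm y * ‖v‖ ≤ (‖v‖⁻¹ * ‖prj (Fp y) v‖ + ‖v‖⁻¹ * ‖prj (Fm y) v‖) * ‖v‖ :=
      mul_le_mul_of_nonneg_right h hvn.le
    calc muF Fp Fm y * ‖v‖ ≤ (‖v‖⁻¹ * ‖prj (Fp y) v‖ + ‖v‖⁻¹ * ‖prj (Fm y) v‖) * ‖v‖ := h2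
      _ = ‖prj (Fp y) v‖ + ‖prj (Fm y) v‖ := by field_simp

lemma muF_diff (Fp Fm : K → Submodule ℝ (EuclideanSpace ℝ (Fin m))) (hm : 1 ≤ m) (x y : K) :
    muF Fp Fm x ≤ muF Fp Fm y +
      2 * subDist (Fp x) (Fp y) + 2 * subDist (Fm x) (Fm y) := by
  obtain ⟨v, hv1, hveq⟩ := muF_attained Fp Fm hm y
  have h1 : muF Fp Fm x ≤ ‖prj (Fp x) v‖ + ‖prj (Fm x) v‖ := muF_le Fp Fm x v hv1
  have h2 : ‖prj (Fp x) v‖ ≤ ‖prj (Fp y) v‖ + 2 * subDist (Fp x) (Fp y) := by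
    have := prj_diff_le (Fp x) (Fp y) v
    rw [hv1, mul_one] at this
    calc ‖prj (Fp x) v‖ ≤ ‖prj (Fp y) v‖ + ‖prj (Fp x) v - prj (Fp y) v‖ := by
          have := norm_add_le (prj (Fp y) v) (prj (Fp x) v - prj (Fp y) v)
          simpa using this
      _ ≤ ‖prj (Fp y) v‖ + 2 * subDist (Fp x) (Fp y) := by linarith
  have h3 : ‖prj (Fm x) v‖ ≤ ‖prj (Fm y) v‖ + 2 * subDist (Fm x) (Fm y) := by
    have := prj_diff_le (Fm x) (Fm y) v
    rw [hv1, mul_one] at this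
    calc ‖prj (Fm x) v‖ ≤ ‖prj (Fm y) v‖ + ‖prj (Fm x) v - prj (Fm y) v‖ := by
          have := norm_add_le (prj (Fm y) v) (prj (Fm x) v - prj (Fm y) v)
          simpa using this
      _ ≤ ‖prj (Fm y) v‖ + 2 * subDist (Fm x) (Fm y) := by linarith
  linarith [hveq]

end Helpers2

lemma rpow_aux {r R ν ν₀ : ℝ} (hr : 0 ≤ r) (hrR : r ≤ R) (h0 : 0 < ν₀) (hν : ν₀ ≤ ν) :
    r ^ ν ≤ max 1 (R ^ ν) * r ^ ν₀ := by
  have hν' : 0 < ν := lt_of_lt_of_le h0 hν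
  rcases eq_or_lt_of_le hr with h | h
  · rw [← h, Real.zero_rpow hν'.ne', Real.zero_rpow h0.ne', mul_zero]
  rcases le_or_gt r 1 with h1 | h1
  · calc r ^ ν ≤ r ^ ν₀ := Real.rpow_le_rpow_of_exponent_ge h h1 hν
      _ = 1 * r ^ ν₀ := (one_mul _).symm
      _ ≤ max 1 (R ^ ν) * r ^ ν₀ :=
          mul_le_mul_of_nonneg_right (le_max_left _ _) (Real.rpow_nonneg hr _)
  · calc r ^ ν ≤ R ^ ν := Real.rpow_le_rpow hr hrR hν'.le
      _ ≤ max 1 (R ^ ν) := le_max_right _ _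
      _ = max 1 (R ^ ν) * 1 := (mul_one _).symm
      _ ≤ max 1 (R ^ ν) * r ^ ν₀ :=
          mul_le_mul_of_nonneg_left (Real.one_le_rpow h1.le h0.le)
            (le_trans zero_le_one (le_max_left _ _))
set_option maxHeartbeats 1000000 in
theorem holder_intersection_of_grassmannian_maps
    {K : Type*} [MetricSpace K] [CompactSpace K]
    {m : ℕ} (hm : 1 ≤ m) (kp km : ℕ) (hk : m ≤ kp + km)
    (Fp Fm : K → Submodule ℝ (EuclideanSpace ℝ (Fin m)))
    (hdimp : ∀ x : K, Module.finrank ℝ (Fp x) = kp)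
    (hdimm : ∀ x : K, Module.finrank ℝ (Fm x) = km)
    (νp νm : ℝ) (hνp : 0 < νp) (hνm : 0 < νm)
    (Hp : ℝ) (hHp : 0 < Hp)
    (hHolderp : ∀ x y : K, subDist (Fp x) (Fp y) ≤ Hp * dist x y ^ νp)
    (Hm : ℝ) (hHm : 0 < Hm)
    (hHolderm : ∀ x y : K, subDist (Fm x) (Fm y) ≤ Hm * dist x y ^ νm)
    -- general position: F₊(x) + F₋(x) = ℝ^m
    (hgen : ∀ x : K, Fp x ⊔ Fm x = ⊤) :
    ∃ H : ℝ, 0 < H ∧ ∀ x y : K,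
      subDist (Fp x ⊓ Fm x) (Fp y ⊓ Fm y) ≤ H * dist x y ^ (min νp νm) := by
  rcases isEmpty_or_nonempty K with hK | hK
  · exact ⟨1, one_pos, fun x => (IsEmpty.false x).elim⟩
  -- the function μ and its continuity
  set μ : K → ℝ := muF Fp Fm with hμdef
  have hcont : Continuous μ := by
    rw [continuous_iff_continuousAt]
    intro x
    rw [ContinuousAt, tendsto_iff_dist_tendsto_zero]
    have hb : ∀ y : K, dist (μ y) (μ x) ≤
        2 * (Hp * dist y x ^ νp) + 2 * (Hm * dist y x ^ νm) := by
      intro y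
      have h1 := muF_diff Fp Fm hm y x
      have h2 := muF_diff Fp Fm hm x y
      have hp1 : subDist (Fp y) (Fp x) ≤ Hp * dist y x ^ νp := hHolderp y x
      have hm1 : subDist (Fm y) (Fm x) ≤ Hm * dist y x ^ νm := hHolderm y x
      have hp2 : subDist (Fp x) (Fp y) ≤ Hp * dist y x ^ νp := by
        rw [dist_comm]; exact hHolderp x y
      have hm2 : subDist (Fm x) (Fm y) ≤ Hm * dist y x ^ νm := by
        rw [dist_comm]; exact hHolderm x y
      rw [Real.dist_eq, abs_le]
      constructor <;> [skip; skip] <;> simp only [hμdef] <;> linarith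
    refine squeeze_zero (fun y => dist_nonneg) hb ?_
    have h1 : Filter.Tendsto (fun y : K => dist y x) (nhds x) (nhds 0) := by
      have := (continuous_id.dist (continuous_const : Continuous fun _ : K => x)).tendsto x
      simpa using this
    have hp3 : Filter.Tendsto (fun r : ℝ => r ^ νp) (nhds 0) (nhds 0) := by
      have := (Real.continuousAt_rpow_const 0 νp (Or.inr hνp.le)).tendsto
      simpa [Real.zero_rpow hνp.ne'] using this
    have hm3 : Filter.Tendsto (fun r : ℝ => r ^ νm) (nhds 0) (nhds 0) := by
      have := (Real.continuousAt_rpow_const 0 νm (Or.inr hνm.le)).tendsto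
      simpa [Real.zero_rpow hνm.ne'] using this
    have := (((hp3.comp h1).const_mul Hp).const_mul 2).add
      (((hm3.comp h1).const_mul Hm).const_mul 2)
    simpa using this
  -- uniform positive lower bound μ₀
  obtain ⟨x₀, -, hx₀'⟩ :=
    isCompact_univ.exists_isMinOn Set.univ_nonempty hcont.continuousOn
  have hx₀ : ∀ y : K, μ x₀ ≤ μ y := fun y => hx₀' (Set.mem_univ y)
  set μ₀ : ℝ := μ x₀ with hμ₀def
  have hμ₀ : 0 < μ₀ := muF_pos Fp Fm hm x₀ (hgen x₀)
  have hμ₀le : ∀ y : K, μ₀ ≤ μ y := hx₀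
  -- splitting with uniformly bounded pieces
  have hsplit : ∀ (y : K) (z : EuclideanSpace ℝ (Fin m)),
      ∃ a ∈ Fp y, ∃ b ∈ Fm y, a + b = z ∧
        ‖a‖ ≤ 2 / μ₀ ^ 2 * ‖z‖ ∧ ‖b‖ ≤ 2 / μ₀ ^ 2 * ‖z‖ := by
    intro y z
    set T : EuclideanSpace ℝ (Fin m) →ₗ[ℝ] EuclideanSpace ℝ (Fin m) :=
      { toFun := fun u => prj (Fp y) u + prj (Fm y) u
        map_add' := fun u v => by
          show prj (Fp y) (u + v) + prj (Fm y) (u + v) = _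
          rw [prj_add, prj_add]; abel
        map_smul' := fun c u => by
          show prj (Fp y) (c • u) + prj (Fm y) (c • u) = _
          rw [prj_smul, prj_smul, RingHom.id_apply, smul_add] } with hTdef
    have hTapp : ∀ u, T u = prj (Fp y) u + prj (Fm y) u := fun u => rfl
    have hTinner : ∀ u, (inner ℝ (T u) u : ℝ) = ‖prj (Fp y) u‖ ^ 2 + ‖prj (Fm y) u‖ ^ 2 := by
      intro u
      rw [hTapp, inner_add_left, inner_prj_self, inner_prj_self]
    have hlow : ∀ u, μ₀ * ‖u‖ ≤ ‖prj (Fp y) u‖ + ‖prj (Fm y) u‖ := by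
      intro u
      calc μ₀ * ‖u‖ ≤ μ y * ‖u‖ := mul_le_mul_of_nonneg_right (hμ₀le y) (norm_nonneg u)
        _ ≤ _ := muF_lower Fp Fm y u
    have hinj : Function.Injective T := by
      apply (injective_iff_map_eq_zero T).mpr
      intro u hu
      have h1 : (inner ℝ (T u) u : ℝ) = 0 := by rw [hu, inner_zero_left]
      rw [hTinner] at h1
      have h2 : ‖prj (Fp y) u‖ = 0 ∧ ‖prj (Fm y) u‖ = 0 := by
        constructor <;> nlinarith [norm_nonneg (prj (Fp y) u), norm_nonneg (prj (Fm y) u)]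
      have h3 := hlow u
      rw [h2.1, h2.2] at h3
      have : ‖u‖ = 0 := by nlinarith [norm_nonneg u]
      exact norm_eq_zero.mp this
    obtain ⟨u, hu⟩ := (LinearMap.injective_iff_surjective).mp hinj z
    refine ⟨prj (Fp y) u, prj_mem _ _, prj (Fm y) u, prj_mem _ _, by rw [← hTapp, hu], ?_, ?_⟩ <;>
    · have h1 : (inner ℝ z u : ℝ) = ‖prj (Fp y) u‖ ^ 2 + ‖prj (Fm y) u‖ ^ 2 := by
        rw [← hu, hTinner]
      have h2 : (inner ℝ z u : ℝ) ≤ ‖z‖ * ‖u‖ := real_inner_le_norm z u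
      have h3 := hlow u
      have h4 : ‖prj (Fp y) u‖ ≤ ‖u‖ := norm_prj_le _ _
      have h5 : ‖prj (Fm y) u‖ ≤ ‖u‖ := norm_prj_le _ _
      rcases eq_or_lt_of_le (norm_nonneg u) with h6 | h6
      · have hu0 : u = 0 := norm_eq_zero.mp h6.symm
        rw [hu0]
        have : prj (Fp y) (0 : EuclideanSpace ℝ (Fin m)) = 0 := by simp [prj]
        have : prj (Fm y) (0 : EuclideanSpace ℝ (Fin m)) = 0 := by simp [prj]
        simp only [‹prj (Fp y) (0 : EuclideanSpace ℝ (Fin m)) = 0›,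
          ‹prj (Fm y) (0 : EuclideanSpace ℝ (Fin m)) = 0›, norm_zero]
        positivity
      · -- μ₀^2 ‖u‖^2 ≤ 2(‖a‖²+‖b‖²) = 2⟪z,u⟫ ≤ 2‖z‖‖u‖, so μ₀^2 ‖u‖ ≤ 2‖z‖
        have e1 : (μ₀ * ‖u‖) ^ 2 ≤ (‖prj (Fp y) u‖ + ‖prj (Fm y) u‖) ^ 2 :=
          pow_le_pow_left₀ (mul_nonneg hμ₀.le (norm_nonneg u)) h3 2
        have e2 : (‖prj (Fp y) u‖ + ‖prj (Fm y) u‖) ^ 2 ≤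
            2 * (‖prj (Fp y) u‖ ^ 2 + ‖prj (Fm y) u‖ ^ 2) := by
          nlinarith [sq_nonneg (‖prj (Fp y) u‖ - ‖prj (Fm y) u‖)]
        have hsq : μ₀ ^ 2 * ‖u‖ ^ 2 ≤ 2 * (‖z‖ * ‖u‖) := by nlinarith
        have key : μ₀ ^ 2 * ‖u‖ ≤ 2 * ‖z‖ := by nlinarith
        have hule : ‖u‖ ≤ 2 / μ₀ ^ 2 * ‖z‖ := by
          rw [div_mul_eq_mul_div, le_div_iff₀ (by positivity : (0:ℝ) < μ₀ ^ 2)]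
          nlinarith
        linarith
  -- the main pointwise estimate
  have hmain : ∀ x y : K, ∀ v ∈ Fp x ⊓ Fm x, ‖v‖ = 1 →
      Metric.infDist v ((Fp y ⊓ Fm y : Submodule ℝ (EuclideanSpace ℝ (Fin m))) :
          Set (EuclideanSpace ℝ (Fin m))) ≤
        (1 + 2 / μ₀ ^ 2) * (subDist (Fp x) (Fp y) + subDist (Fm x) (Fm y)) := by
    intro x y v hv hv1
    obtain ⟨hvp, hvm⟩ := Submodule.mem_inf.mp hv
    set dp := subDist (Fp x) (Fp y) with hdp
    set dm := subDist (Fm x) (Fm y) with hdm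
    have hdp0 : 0 ≤ dp := subDist_nonneg _ _
    have hdm0 : 0 ≤ dm := subDist_nonneg _ _
    set wp := prj (Fp y) v with hwp
    set wm := prj (Fm y) v with hwm
    have h1 : ‖v - wp‖ ≤ dp := by
      have := norm_sub_prj_le (Fp x) (Fp y) v hvp
      rwa [hv1, mul_one] at this
    have h2 : ‖v - wm‖ ≤ dm := by
      have := norm_sub_prj_le (Fm x) (Fm y) v hvm
      rwa [hv1, mul_one] at this
    have hz : ‖wp - wm‖ ≤ dp + dm := by
      calc ‖wp - wm‖ = ‖-(v - wp) + (v - wm)‖ := by congr 1; abel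
        _ ≤ ‖-(v - wp)‖ + ‖v - wm‖ := norm_add_le _ _
        _ = ‖v - wp‖ + ‖v - wm‖ := by rw [norm_neg]
        _ ≤ dp + dm := add_le_add h1 h2
    obtain ⟨a, ha, b, hb, hab, hanorm, -⟩ := hsplit y (wp - wm)
    set w := wp - a with hw
    have hwFp : w ∈ Fp y := Submodule.sub_mem _ (prj_mem _ _) ha
    have hwFm : w ∈ Fm y := by
      have h' : a + b + wm = wp := by rw [hab]; abel
      have h'' : w = wm + b := by rw [hw, ← h']; abel
      rw [h'']
      exact Submodule.add_mem _ (prj_mem _ _) hb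
    have hvw : ‖v - w‖ ≤ dp + 2 / μ₀ ^ 2 * (dp + dm) := by
      have hsplit2 : v - w = (v - wp) + a := by rw [hw]; abel
      have hanorm2 : ‖a‖ ≤ 2 / μ₀ ^ 2 * (dp + dm) := by
        calc ‖a‖ ≤ 2 / μ₀ ^ 2 * ‖wp - wm‖ := hanorm
          _ ≤ 2 / μ₀ ^ 2 * (dp + dm) :=
            mul_le_mul_of_nonneg_left hz (by positivity)
      calc ‖v - w‖ = ‖(v - wp) + a‖ := by rw [hsplit2]
        _ ≤ ‖v - wp‖ + ‖a‖ := norm_add_le _ _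
        _ ≤ dp + 2 / μ₀ ^ 2 * (dp + dm) := add_le_add h1 hanorm2
    have hmem : w ∈ ((Fp y ⊓ Fm y : Submodule ℝ (EuclideanSpace ℝ (Fin m))) :
        Set (EuclideanSpace ℝ (Fin m))) := Submodule.mem_inf.mpr ⟨hwFp, hwFm⟩
    calc Metric.infDist v ((Fp y ⊓ Fm y : Submodule ℝ (EuclideanSpace ℝ (Fin m))) :
            Set (EuclideanSpace ℝ (Fin m))) ≤ dist v w :=
          Metric.infDist_le_dist_of_mem hmem
      _ = ‖v - w‖ := dist_eq_norm v w
      _ ≤ dp + 2 / μ₀ ^ 2 * (dp + dm) := hvw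
      _ ≤ (1 + 2 / μ₀ ^ 2) * (dp + dm) := by nlinarith
  -- subDist of intersections
  have hsub : ∀ x y : K, subDist (Fp x ⊓ Fm x) (Fp y ⊓ Fm y) ≤
      (1 + 2 / μ₀ ^ 2) * (subDist (Fp x) (Fp y) + subDist (Fm x) (Fm y)) := by
    intro x y
    have hrhs : 0 ≤ (1 + 2 / μ₀ ^ 2) * (subDist (Fp x) (Fp y) + subDist (Fm x) (Fm y)) := by
      have := subDist_nonneg (Fp x) (Fp y)
      have := subDist_nonneg (Fm x) (Fm y)
      positivity
    rw [subDist]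
    apply max_le
    · apply Real.sSup_le _ hrhs
      rintro r ⟨v, hv, hn, rfl⟩
      exact hmain x y v hv hn
    · apply Real.sSup_le _ hrhs
      rintro r ⟨v, hv, hn, rfl⟩
      have := hmain y x v hv hn
      rwa [subDist_symm (Fp y) (Fp x), subDist_symm (Fm y) (Fm x)] at this
  -- assemble the final constant
  set ν := min νp νm with hν
  have hν0 : 0 < ν := lt_min hνp hνm
  set R := Metric.diam (Set.univ : Set K) with hR
  have hdistR : ∀ x y : K, dist x y ≤ R :=
    fun x y => Metric.dist_le_diam_of_mem isCompact_univ.isBounded trivial trivial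
  set Dp := max 1 (R ^ νp) with hDp
  set Dm := max 1 (R ^ νm) with hDm
  have hDp1 : (1:ℝ) ≤ Dp := le_max_left _ _
  have hDm1 : (1:ℝ) ≤ Dm := le_max_left _ _
  refine ⟨(1 + 2 / μ₀ ^ 2) * (Hp * Dp + Hm * Dm), ?_, ?_⟩
  · have h1 : (0:ℝ) < 1 + 2 / μ₀ ^ 2 := by positivity
    have h2 : (0:ℝ) < Hp * Dp + Hm * Dm := by
      have := mul_pos hHp (lt_of_lt_of_le one_pos hDp1)
      have := mul_pos hHm (lt_of_lt_of_le one_pos hDm1)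
      linarith
    exact mul_pos h1 h2
  · intro x y
    have hd0 : (0:ℝ) ≤ dist x y := dist_nonneg
    have hp := rpow_aux hd0 (hdistR x y) hν0 (min_le_left νp νm)
    have hm' := rpow_aux hd0 (hdistR x y) hν0 (min_le_right νp νm)
    have hC : (0:ℝ) ≤ 1 + 2 / μ₀ ^ 2 := by positivity
    calc subDist (Fp x ⊓ Fm x) (Fp y ⊓ Fm y) ≤
          (1 + 2 / μ₀ ^ 2) * (subDist (Fp x) (Fp y) + subDist (Fm x) (Fm y)) := hsub x y
      _ ≤ (1 + 2 / μ₀ ^ 2) * (Hp * dist x y ^ νp + Hm * dist x y ^ νm) := by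
          have := hHolderp x y
          have := hHolderm x y
          apply mul_le_mul_of_nonneg_left _ hC
          linarith
      _ ≤ (1 + 2 / μ₀ ^ 2) * (Hp * (Dp * dist x y ^ ν) + Hm * (Dm * dist x y ^ ν)) := by
          apply mul_le_mul_of_nonneg_left _ hC
          have h3 : Hp * dist x y ^ νp ≤ Hp * (Dp * dist x y ^ ν) :=
            mul_le_mul_of_nonneg_left hp hHp.le
          have h4 : Hm * dist x y ^ νm ≤ Hm * (Dm * dist x y ^ ν) :=
            mul_le_mul_of_nonneg_left hm' hHm.le
          linarith
      _ = (1 + 2 / μ₀ ^ 2) * (Hp * Dp + Hm * Dm) * dist x y ^ ν := by ring
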